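/- Let R ∈ C¹([0,∞)) satisfy condition (Rcond). Then for each fixed b₁ > 0 and b₂ > 0 there exists s₀ > 0 such that the map s ↦ s^{b₁} R(s)^{−b₂} is monotone increasing on [s₀, ∞). -/

import Mathlib

noncomputable section

/-- Condition (Rcond): `R ∈ C¹([0,∞))`, `R(t) > 0` and `R'(t) ≥ 0` for `t > 0`,
`R(t) → ∞` as `t → ∞`, and there are `C̄ > 0`, `t̲ > e` with
`R'(t)/R(t) ≤ C̄/(t log t)` for all `t ≥ t̲`. -/
structure RCond (R : ℝ → ℝ) : Prop where
  contDiffOn : ContDiffOn ℝ 1 R (Set.Ici 0)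
  pos : ∀ t > (0:ℝ), 0 < R t
  deriv_nonneg : ∀ t > (0:ℝ), 0 ≤ deriv R t
  tendsto_atTop : Filter.Tendsto R Filter.atTop Filter.atTop
  ratio : ∃ Cbar > (0:ℝ), ∃ tlow > Real.exp 1,
    ∀ t ≥ tlow, deriv R t / R t ≤ Cbar / (t * Real.log t)

/-- under (Rcond), for fixed `b₁, b₂ > 0` the map
`s ↦ s^{b₁} R(s)^{−b₂}` is monotone increasing on some `[s₀, ∞)`. -/
theorem monotone_rpow_mul_R_neg (R : ℝ → ℝ) (hR : RCond R)
    (b₁ b₂ : ℝ) (hb₁ : 0 < b₁) (hb₂ : 0 < b₂) :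
    ∃ s₀ > (0:ℝ), MonotoneOn (fun s : ℝ => s ^ b₁ * R s ^ (-b₂)) (Set.Ici s₀) := by
  obtain ⟨C, hC, t0, ht0, hratio⟩ := hR.ratio
  have hexp1 : (1:ℝ) < Real.exp 1 := by
    have := Real.exp_one_gt_d9; linarith
  have ht0pos : 0 < t0 := lt_trans (by linarith) ht0
  set s₀ : ℝ := max t0 (Real.exp (b₂ * C / b₁)) with hs₀def
  have hs₀t0 : t0 ≤ s₀ := le_max_left _ _
  have hs₀pos : 0 < s₀ := lt_of_lt_of_le ht0pos hs₀t0
  refine ⟨s₀, hs₀pos, ?_⟩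
  have hRderiv : ∀ s : ℝ, 0 < s → HasDerivAt R (deriv R s) s := by
    intro s hs
    have h1 : ContDiffAt ℝ 1 R s := hR.contDiffOn.contDiffAt (Ici_mem_nhds hs)
    exact (h1.differentiableAt one_ne_zero).hasDerivAt
  have key : ∀ s ∈ Set.Ici s₀, HasDerivAt (fun s : ℝ => s ^ b₁ * R s ^ (-b₂))
      (s ^ (b₁ - 1) * R s ^ (-b₂ - 1) * (b₁ * R s - b₂ * (s * deriv R s))) s ∧
      0 ≤ s ^ (b₁ - 1) * R s ^ (-b₂ - 1) * (b₁ * R s - b₂ * (s * deriv R s)) := by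
    intro s hs
    have hss₀ : s₀ ≤ s := hs
    have hspos : 0 < s := lt_of_lt_of_le hs₀pos hss₀
    have hRpos : 0 < R s := hR.pos s hspos
    have hst0 : t0 ≤ s := le_trans hs₀t0 hss₀
    have hlog1 : 1 < Real.log s := by
      have : Real.exp 1 < s := lt_of_lt_of_le ht0 hst0
      calc (1:ℝ) = Real.log (Real.exp 1) := (Real.log_exp 1).symm
        _ < Real.log s := Real.log_lt_log (Real.exp_pos 1) this
    have hlog2 : b₂ * C / b₁ ≤ Real.log s := by
      calc b₂ * C / b₁ = Real.log (Real.exp (b₂ * C / b₁)) := (Real.log_exp _).symm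
        _ ≤ Real.log s := Real.log_le_log (Real.exp_pos _)
            (le_trans (le_max_right t0 _) hss₀)
    constructor
    · have h1 : HasDerivAt (fun s : ℝ => s ^ b₁) (b₁ * s ^ (b₁ - 1)) s :=
        Real.hasDerivAt_rpow_const (Or.inl (ne_of_gt hspos))
      have h2 : HasDerivAt (fun s : ℝ => R s ^ (-b₂))
          (deriv R s * (-b₂) * R s ^ (-b₂ - 1)) s :=
        (hRderiv s hspos).rpow_const (Or.inl (ne_of_gt hRpos))
      have h3 := h1.mul h2
      have e1 : s ^ b₁ = s ^ (b₁ - 1) * s := by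
        rw [← Real.rpow_add_one (ne_of_gt hspos)]; ring_nf
      have e2 : R s ^ (-b₂) = R s ^ (-b₂ - 1) * R s := by
        rw [← Real.rpow_add_one (ne_of_gt hRpos)]; ring_nf
      refine h3.congr_deriv ?_
      rw [e1, e2]; ring
    · have hratio' := hratio s hst0
      have hlogpos : 0 < Real.log s := lt_trans one_pos hlog1
      have hmul : deriv R s * (s * Real.log s) ≤ C * R s := by
        rw [div_le_div_iff₀ hRpos (by positivity)] at hratio'
        linarith
      have hbr : 0 ≤ b₁ * R s - b₂ * (s * deriv R s) := by
        have h4 : b₂ * (deriv R s * (s * Real.log s)) ≤ b₂ * (C * R s) :=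
          mul_le_mul_of_nonneg_left hmul (le_of_lt hb₂)
        have h5 : b₂ * C ≤ b₁ * Real.log s := by
          rw [div_le_iff₀ hb₁] at hlog2; linarith [mul_comm (Real.log s) b₁]
        have h6 : b₂ * (C * R s) ≤ b₁ * Real.log s * R s :=
          by nlinarith
        have h7 : b₂ * (s * deriv R s) * Real.log s ≤ b₁ * R s * Real.log s := by
          nlinarith
        nlinarith
      positivity
  have hconv : Convex ℝ (Set.Ici s₀) := convex_Ici s₀
  have hcont : ContinuousOn (fun s : ℝ => s ^ b₁ * R s ^ (-b₂)) (Set.Ici s₀) :=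
    fun s hs => ((key s hs).1.continuousAt).continuousWithinAt
  have hdiff : DifferentiableOn ℝ (fun s : ℝ => s ^ b₁ * R s ^ (-b₂))
      (interior (Set.Ici s₀)) := by
    rw [interior_Ici]
    exact fun s hs => ((key s (Set.Ioi_subset_Ici_self hs)).1.differentiableAt).differentiableWithinAt
  refine monotoneOn_of_deriv_nonneg hconv hcont hdiff ?_
  intro s hs
  rw [interior_Ici] at hs
  rw [(key s (Set.Ioi_subset_Ici_self hs)).1.deriv]
  exact (key s (Set.Ioi_subset_Ici_self hs)).2
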